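/- Let I ⊆ ℝ be a nonempty open interval and let K, L : I → ℝ be twice continuously differentiable functions with K(p) ≠ 0 and L(p) ≠ 0 for all p ∈ I. If K and L satisfy on I the two equations K''L³ − K L² L'' − 2K'L'L² + 2K L L'² = 0 and −K''K²L + K³L'' − 2K'K²L' + 2K'²KL − 2KL³ = 0, then the function K/L satisfies ((K/L)'(p))² = 1 for all p ∈ I. -/

import Mathlib

/-- Equations (5.21)-(5.22) imply (5.23): if nonvanishing `K, L` satisfy
`K''L³ - K L² L'' - 2K'L'L² + 2K L L'² = 0` and
`-K''K²L + K³L'' - 2K'K²L' + 2K'²KL - 2KL³ = 0` on a nonempty open interval `I`,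
then `((K/L)')² = 1` on `I`. -/
theorem stmt_10 (I : Set ℝ) (hIopen : IsOpen I) (hIne : I.Nonempty) (hIord : I.OrdConnected)
    (K L : ℝ → ℝ) (hK : ContDiffOn ℝ 2 K I) (hL : ContDiffOn ℝ 2 L I)
    (hK0 : ∀ p ∈ I, K p ≠ 0) (hL0 : ∀ p ∈ I, L p ≠ 0)
    (heq1 : ∀ p ∈ I,
      deriv (deriv K) p * L p ^ 3 - K p * L p ^ 2 * deriv (deriv L) p -
        2 * deriv K p * deriv L p * L p ^ 2 + 2 * K p * L p * (deriv L p) ^ 2 = 0)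
    (heq2 : ∀ p ∈ I,
      -(deriv (deriv K) p) * K p ^ 2 * L p + K p ^ 3 * deriv (deriv L) p -
        2 * deriv K p * K p ^ 2 * deriv L p + 2 * (deriv K p) ^ 2 * K p * L p -
        2 * K p * L p ^ 3 = 0) :
    ∀ p ∈ I, (deriv (fun x => K x / L x) p) ^ 2 = 1 := by
  intro p hp
  have hKp := hK0 p hp
  have hLp := hL0 p hp
  have h1 := heq1 p hp
  have h2 := heq2 p hp
  have key : (deriv K p * L p - K p * deriv L p) ^ 2 = L p ^ 4 := by
    have hKL : (2 : ℝ) * K p * L p ≠ 0 := by positivity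
    have hz : 2 * K p * L p *
        ((deriv K p * L p - K p * deriv L p) ^ 2 - L p ^ 4) = 0 := by
      linear_combination K p ^ 2 * h1 + L p ^ 2 * h2
    have := (mul_eq_zero.mp hz).resolve_left hKL
    linarith [sub_eq_zero.mp this]
  have hKd : DifferentiableAt ℝ K p :=
    ((hK.differentiableOn two_ne_zero) p hp).differentiableAt (hIopen.mem_nhds hp)
  have hLd : DifferentiableAt ℝ L p :=
    ((hL.differentiableOn two_ne_zero) p hp).differentiableAt (hIopen.mem_nhds hp)
  rw [deriv_fun_div hKd hLd hLp]
  rw [div_pow, div_eq_one_iff_eq (by positivity)]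
  linear_combination key
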